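/- In the free associative algebra k⟨x₁,…,xₙ⟩ over a field k of characteristic 0, let D_{x_i} denote the cyclic derivative with respect to x_i, defined on a word w by D_{x_i}(w) = Σ_{w = u x_i v} v·u. Then for every element φ of the free algebra, one has Σᵢ [xᵢ, D_{x_i}(φ)] = 0. -/

import Mathlib

open TensorProduct

section Aux

variable {k : Type*} [Field k] {n : ℕ}

private abbrev FA (k : Type*) [Field k] (n : ℕ) := FreeAlgebra k (Fin n)

private lemma mul'_comm_left (x : FA k n) (t : FA k n ⊗[k] FA k n) :
    x * LinearMap.mul' k (FA k n) ((TensorProduct.comm k _ _) t) =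
    LinearMap.mul' k (FA k n) ((TensorProduct.comm k _ _)
      (TensorProduct.map LinearMap.id (LinearMap.mulLeft k x) t)) := by
  induction t using TensorProduct.induction_on with
  | zero => simp
  | tmul u v => simp [mul_assoc]
  | add a b ha hb => simp [mul_add, ha, hb]

private lemma mul'_comm_right (x : FA k n) (t : FA k n ⊗[k] FA k n) :
    LinearMap.mul' k (FA k n) ((TensorProduct.comm k _ _) t) * x =
    LinearMap.mul' k (FA k n) ((TensorProduct.comm k _ _)
      (TensorProduct.map (LinearMap.mulRight k x) LinearMap.id t)) := by
  induction t using TensorProduct.induction_on with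
  | zero => simp
  | tmul u v => simp [mul_assoc]
  | add a b ha hb => simp [add_mul, ha, hb]

private lemma swapLL (x b : FA k n) (t : FA k n ⊗[k] FA k n) :
    TensorProduct.map LinearMap.id (LinearMap.mulLeft k x)
      (TensorProduct.map LinearMap.id (LinearMap.mulRight k b) t) =
    TensorProduct.map LinearMap.id (LinearMap.mulRight k b)
      (TensorProduct.map LinearMap.id (LinearMap.mulLeft k x) t) := by
  induction t using TensorProduct.induction_on with
  | zero => simp
  | tmul u v => simp [mul_assoc]
  | add a c ha hc => simp [ha, hc]

private lemma swapRR (x a : FA k n) (t : FA k n ⊗[k] FA k n) :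
    TensorProduct.map (LinearMap.mulRight k x) LinearMap.id
      (TensorProduct.map (LinearMap.mulLeft k a) LinearMap.id t) =
    TensorProduct.map (LinearMap.mulLeft k a) LinearMap.id
      (TensorProduct.map (LinearMap.mulRight k x) LinearMap.id t) := by
  induction t using TensorProduct.induction_on with
  | zero => simp
  | tmul u v => simp [mul_assoc]
  | add a c ha hc => simp [ha, hc]

private lemma swapLR (f g : FA k n →ₗ[k] FA k n) (t : FA k n ⊗[k] FA k n) :
    TensorProduct.map LinearMap.id g (TensorProduct.map f LinearMap.id t) =
    TensorProduct.map f LinearMap.id (TensorProduct.map LinearMap.id g t) := by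
  induction t using TensorProduct.induction_on with
  | zero => simp
  | tmul u v => simp
  | add a c ha hc => simp [ha, hc]

private theorem key
    (δ : Fin n → (FA k n →ₗ[k] FA k n ⊗[k] FA k n))
    (hLeib : ∀ i (a b : FA k n), δ i (a * b) =
      TensorProduct.map LinearMap.id (LinearMap.mulRight k b) (δ i a) +
      TensorProduct.map (LinearMap.mulLeft k a) LinearMap.id (δ i b))
    (hgen : ∀ i j, δ i (FreeAlgebra.ι k j) =
      if i = j then (1 : FA k n) ⊗ₜ[k] 1 else 0)
    (φ : FA k n) :
    ∑ i : Fin n,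
      (TensorProduct.map LinearMap.id (LinearMap.mulLeft k (FreeAlgebra.ι k i)) (δ i φ) -
       TensorProduct.map (LinearMap.mulRight k (FreeAlgebra.ι k i)) LinearMap.id (δ i φ)) =
      (1 : FA k n) ⊗ₜ[k] φ - φ ⊗ₜ[k] 1 := by
  have hone : ∀ i, δ i 1 = 0 := by
    intro i
    have h := hLeib i 1 1
    simp only [one_mul, LinearMap.mulRight_one, LinearMap.mulLeft_one,
      TensorProduct.map_id, LinearMap.id_coe, id_eq] at h
    exact right_eq_add.mp h
  induction φ using FreeAlgebra.induction with
  | grade0 r =>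
      have : ∀ i, δ i (algebraMap k (FA k n) r) = 0 := by
        intro i
        rw [Algebra.algebraMap_eq_smul_one, map_smul, hone, smul_zero]
      simp only [this, map_zero, sub_zero, Finset.sum_const_zero]
      rw [Algebra.algebraMap_eq_smul_one, TensorProduct.tmul_smul,
        TensorProduct.smul_tmul', sub_self]
  | grade1 j =>
      have : ∀ i : Fin n,
          TensorProduct.map LinearMap.id (LinearMap.mulLeft k (FreeAlgebra.ι k i))
            (δ i (FreeAlgebra.ι k j)) -
          TensorProduct.map (LinearMap.mulRight k (FreeAlgebra.ι k i)) LinearMap.id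
            (δ i (FreeAlgebra.ι k j)) =
          if i = j then (1 : FA k n) ⊗ₜ[k] FreeAlgebra.ι k j -
            FreeAlgebra.ι k j ⊗ₜ[k] 1 else 0 := by
        intro i
        rw [hgen]
        by_cases h : i = j
        · subst h; simp
        · simp [h]
      simp only [this]
      simp
  | mul a b ha hb =>
      have expand : ∀ i : Fin n,
          TensorProduct.map LinearMap.id (LinearMap.mulLeft k (FreeAlgebra.ι k i)) (δ i (a * b)) -
          TensorProduct.map (LinearMap.mulRight k (FreeAlgebra.ι k i)) LinearMap.id (δ i (a * b)) =
          TensorProduct.map LinearMap.id (LinearMap.mulRight k b)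
            (TensorProduct.map LinearMap.id (LinearMap.mulLeft k (FreeAlgebra.ι k i)) (δ i a) -
             TensorProduct.map (LinearMap.mulRight k (FreeAlgebra.ι k i)) LinearMap.id (δ i a)) +
          TensorProduct.map (LinearMap.mulLeft k a) LinearMap.id
            (TensorProduct.map LinearMap.id (LinearMap.mulLeft k (FreeAlgebra.ι k i)) (δ i b) -
             TensorProduct.map (LinearMap.mulRight k (FreeAlgebra.ι k i)) LinearMap.id (δ i b)) := by
        intro i
        rw [hLeib i a b]
        simp only [map_add, map_sub]
        rw [swapLL, swapRR, swapLR (LinearMap.mulRight k (FreeAlgebra.ι k i))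
          (LinearMap.mulRight k b), ← swapLR (LinearMap.mulLeft k a)
          (LinearMap.mulLeft k (FreeAlgebra.ι k i))]
        abel
      rw [Finset.sum_congr rfl fun i _ => expand i, Finset.sum_add_distrib,
        ← map_sum, ← map_sum, ha, hb]
      simp only [map_sub, TensorProduct.map_tmul, LinearMap.id_coe, id_eq,
        LinearMap.mulRight_apply, LinearMap.mulLeft_apply, one_mul, mul_one]
      abel
  | add a b ha hb =>
      simp only [map_add]
      calc ∑ i : Fin n, _ = (1 : FA k n) ⊗ₜ[k] a - a ⊗ₜ[k] 1 +
            ((1 : FA k n) ⊗ₜ[k] b - b ⊗ₜ[k] 1) := by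
              rw [← ha, ← hb, ← Finset.sum_add_distrib]
              apply Finset.sum_congr rfl
              intro i _
              abel
        _ = (1 : FA k n) ⊗ₜ[k] (a + b) - (a + b) ⊗ₜ[k] 1 := by
              rw [TensorProduct.tmul_add, TensorProduct.add_tmul]; abel

end Aux

/-- In the free associative algebra `k⟨x₁,…,xₙ⟩` over a field of
characteristic `0`, let `∂/∂xᵢ` be the double derivations determined by
`∂xⱼ/∂xᵢ = δᵢⱼ 1⊗1` and the Leibniz rule for the outer bimodule structure, and
let `D_{xᵢ} = μ ∘ τ ∘ ∂/∂xᵢ` be the corresponding cyclic derivatives.  Then for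
every `φ` in the free algebra, `∑ᵢ [xᵢ, D_{xᵢ}(φ)] = 0`. -/
theorem sum_commutator_cyclic_derivative_eq_zero
    {k : Type*} [Field k] [CharZero k] {n : ℕ}
    (δ : Fin n → (FreeAlgebra k (Fin n) →ₗ[k]
      FreeAlgebra k (Fin n) ⊗[k] FreeAlgebra k (Fin n)))
    (hLeib : ∀ i (a b : FreeAlgebra k (Fin n)), δ i (a * b) =
      TensorProduct.map LinearMap.id (LinearMap.mulRight k b) (δ i a) +
      TensorProduct.map (LinearMap.mulLeft k a) LinearMap.id (δ i b))
    (hgen : ∀ i j, δ i (FreeAlgebra.ι k j) =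
      if i = j then (1 : FreeAlgebra k (Fin n)) ⊗ₜ[k] 1 else 0)
    (φ : FreeAlgebra k (Fin n)) :
    ∑ i : Fin n,
      (FreeAlgebra.ι k i *
          LinearMap.mul' k (FreeAlgebra k (Fin n))
            ((TensorProduct.comm k _ _) (δ i φ)) -
        LinearMap.mul' k (FreeAlgebra k (Fin n))
            ((TensorProduct.comm k _ _) (δ i φ)) * FreeAlgebra.ι k i) = 0 := by
  have h := key δ hLeib hgen φ
  calc ∑ i : Fin n,
      (FreeAlgebra.ι k i *
          LinearMap.mul' k (FreeAlgebra k (Fin n))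
            ((TensorProduct.comm k _ _) (δ i φ)) -
        LinearMap.mul' k (FreeAlgebra k (Fin n))
            ((TensorProduct.comm k _ _) (δ i φ)) * FreeAlgebra.ι k i)
      = LinearMap.mul' k (FreeAlgebra k (Fin n)) ((TensorProduct.comm k _ _)
          (∑ i : Fin n,
            (TensorProduct.map LinearMap.id (LinearMap.mulLeft k (FreeAlgebra.ι k i)) (δ i φ) -
             TensorProduct.map (LinearMap.mulRight k (FreeAlgebra.ι k i)) LinearMap.id (δ i φ)))) := by
        rw [map_sum, map_sum]
        apply Finset.sum_congr rfl
        intro i _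
        rw [mul'_comm_left, mul'_comm_right, map_sub, map_sub]
    _ = 0 := by rw [h]; simp
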